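/- Let G be a finite connected twin-free split graph. Then χ_rlid(G) ≤ ω(G) + 2, where ω(G) is the clique number of G. -/

import Mathlib

set_option linter.unusedSectionVars false


open SimpleGraph Set

variable {V : Type*}

/-- The closed neighborhood of a vertex. -/
def closedNbhd (G : SimpleGraph V) (v : V) : Set V := insert v (G.neighborSet v)

/-- A (not necessarily proper) coloring `c : V → Fin k` is a relaxed locally identifying coloring
(rlid-coloring) if any two adjacent vertices with distinct closed neighborhoods receive distinct
sets of colors on their closed neighborhoods. -/
def IsRlidColoring (G : SimpleGraph V) {k : ℕ} (c : V → Fin k) : Prop :=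
  ∀ u v : V, G.Adj u v → closedNbhd G u ≠ closedNbhd G v →
    c '' closedNbhd G u ≠ c '' closedNbhd G v

/-- The relaxed locally identifying chromatic number: the least `k` such that `G` admits an
rlid-coloring with `k` colors. -/
noncomputable def rlidChromNum (G : SimpleGraph V) : ℕ :=
  sInf {k : ℕ | ∃ c : V → Fin k, IsRlidColoring G c}

/-- A graph is twin-free if distinct vertices have distinct closed neighborhoods. -/
def TwinFree (G : SimpleGraph V) : Prop :=
  ∀ u v : V, closedNbhd G u = closedNbhd G v → u = v

/-- A split graph: the vertex set can be partitioned into a clique `K` and an independent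
set (its complement). -/
def IsSplitGraph (G : SimpleGraph V) : Prop :=
  ∃ K : Set V, G.IsClique K ∧ ∀ u ∈ Kᶜ, ∀ v ∈ Kᶜ, ¬ G.Adj u v

namespace RlidSplitAux

open Finset

variable [Fintype V] [DecidableEq V] (G : SimpleGraph V) [DecidableRel G.Adj]

/-- S-neighbourhood (outside a fixed clique `K`) of a vertex. -/
def Af (K : Finset V) (u : V) : Finset V :=
  Finset.univ.filter (fun s => s ∉ K ∧ G.Adj u s)

/-- K-neighbourhood of a vertex. -/
def Bf (K : Finset V) (s : V) : Finset V :=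
  K.filter (fun u => G.Adj s u)

lemma mem_Af {K : Finset V} {u s : V} : s ∈ Af G K u ↔ s ∉ K ∧ G.Adj u s := by
  simp [Af]

lemma mem_Bf {K : Finset V} {s u : V} : u ∈ Bf G K s ↔ u ∈ K ∧ G.Adj s u := by
  simp [Bf]

lemma closedNbhd_clique {K : Finset V} (hK : G.IsClique (K : Set V)) {u : V} (hu : u ∈ K) :
    closedNbhd G u = (K : Set V) ∪ (Af G K u : Set V) := by
  ext w
  simp only [closedNbhd, Set.mem_insert_iff, mem_neighborSet, Set.mem_union, Finset.mem_coe,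
    mem_Af]
  constructor
  · rintro (rfl | hadj)
    · exact Or.inl hu
    · by_cases hw : w ∈ K
      · exact Or.inl hw
      · exact Or.inr ⟨hw, hadj⟩
  · rintro (hw | ⟨hw, hadj⟩)
    · by_cases hwu : w = u
      · exact Or.inl hwu
      · exact Or.inr (hK hu hw (fun h => hwu h.symm))
    · exact Or.inr hadj

lemma closedNbhd_indep {K : Finset V}
    (hind : ∀ u ∉ K, ∀ v ∉ K, ¬ G.Adj u v) {s : V} (hs : s ∉ K) :
    closedNbhd G s = insert s ((Bf G K s : Finset V) : Set V) := by
  ext w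
  simp only [closedNbhd, Set.mem_insert_iff, mem_neighborSet, Finset.coe_insert,
    Finset.mem_coe, mem_Bf]
  constructor
  · rintro (rfl | hadj)
    · exact Or.inl rfl
    · refine Or.inr ⟨?_, hadj⟩
      by_contra hw
      exact hind s hs w hw hadj
  · rintro (rfl | ⟨_, hadj⟩)
    · exact Or.inl rfl
    · exact Or.inr hadj

/-- Refinement lemma: any partial test family can be extended to a separating family,
paying one element per missing class. -/
lemma sep_extend (K : Finset V) (A : V → Finset V)
    (hA : ∀ u ∈ K, ∀ v ∈ K, A u = A v → u = v)
    (hAS : ∀ u ∈ K, ∀ s ∈ A u, s ∉ K) :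
    ∀ (N : ℕ) (T0 : Finset V), (∀ s ∈ T0, s ∉ K) →
      K.card ≤ (K.image (fun u => A u ∩ T0)).card + N →
      ∃ T : Finset V, T0 ⊆ T ∧ (∀ s ∈ T, s ∉ K) ∧
        (∀ u ∈ K, ∀ v ∈ K, A u ∩ T = A v ∩ T → u = v) ∧ T.card ≤ T0.card + N := by
  intro N
  induction N with
  | zero =>
    intro T0 hT0 hle
    have hcard : (K.image (fun u => A u ∩ T0)).card = K.card :=
      le_antisymm Finset.card_image_le (by simpa using hle)
    have hinj := Finset.card_image_iff.mp hcard
    exact ⟨T0, subset_rfl, hT0,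
      fun u hu v hv h => hinj (Finset.mem_coe.mpr hu) (Finset.mem_coe.mpr hv) h, by simp⟩
  | succ N ih =>
    intro T0 hT0 hle
    by_cases hinj : ∀ u ∈ K, ∀ v ∈ K, A u ∩ T0 = A v ∩ T0 → u = v
    · exact ⟨T0, subset_rfl, hT0, hinj, Nat.le_add_right _ _⟩
    · push_neg at hinj
      obtain ⟨u, hu, v, hv, heq, huv⟩ := hinj
      have main : ∀ a b s, a ∈ K → b ∈ K → A a ∩ T0 = A b ∩ T0 → s ∈ A a → s ∉ A b →
          ∃ T : Finset V, T0 ⊆ T ∧ (∀ s ∈ T, s ∉ K) ∧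
            (∀ u ∈ K, ∀ v ∈ K, A u ∩ T = A v ∩ T → u = v) ∧ T.card ≤ T0.card + (N + 1) := by
        intro a b s ha hb hab hsa hsb
        have hsT0 : s ∉ T0 := by
          intro hsT0
          have : s ∈ A b ∩ T0 := hab ▸ Finset.mem_inter.mpr ⟨hsa, hsT0⟩
          exact hsb (Finset.mem_inter.mp this).1
        set T1 := insert s T0 with hT1
        have herase : ∀ w, (A w ∩ T1).erase s = A w ∩ T0 := by
          intro w
          ext y
          simp only [Finset.mem_erase, Finset.mem_inter, hT1, Finset.mem_insert]
          constructor
          · rintro ⟨hys, hyA, (rfl | hyT)⟩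
            · exact absurd rfl hys
            · exact ⟨hyA, hyT⟩
          · rintro ⟨hyA, hyT⟩
            exact ⟨fun h => hsT0 (h ▸ hyT), hyA, Or.inr hyT⟩
        have himg : K.image (fun w => A w ∩ T0)
            = (K.image (fun w => A w ∩ T1)).image (fun X => X.erase s) := by
          rw [Finset.image_image]
          apply Finset.image_congr
          intro w _
          exact (herase w).symm
        have hmle : (K.image (fun w => A w ∩ T0)).card ≤ (K.image (fun w => A w ∩ T1)).card := by
          rw [himg]
          exact Finset.card_image_le
        have hmne : (K.image (fun w => A w ∩ T0)).card ≠ (K.image (fun w => A w ∩ T1)).card := by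
          intro hcardeq
          have : ((K.image (fun w => A w ∩ T1)).image (fun X => X.erase s)).card
              = (K.image (fun w => A w ∩ T1)).card := by rw [← himg, hcardeq]
          have hinjOn := Finset.card_image_iff.mp this
          have h1 : A a ∩ T1 ∈ K.image (fun w => A w ∩ T1) :=
            Finset.mem_image.mpr ⟨a, ha, rfl⟩
          have h2 : A b ∩ T1 ∈ K.image (fun w => A w ∩ T1) :=
            Finset.mem_image.mpr ⟨b, hb, rfl⟩
          have h3 : (A a ∩ T1).erase s = (A b ∩ T1).erase s := by
            rw [herase, herase]; exact hab
          have h4 := hinjOn (Finset.mem_coe.mpr h1) (Finset.mem_coe.mpr h2) h3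
          have h5 : s ∈ A a ∩ T1 :=
            Finset.mem_inter.mpr ⟨hsa, Finset.mem_insert_self s T0⟩
          rw [h4] at h5
          exact hsb (Finset.mem_inter.mp h5).1
        have hT1S : ∀ t ∈ T1, t ∉ K := by
          intro t ht
          rcases Finset.mem_insert.mp ht with rfl | ht
          · exact hAS a ha t hsa
          · exact hT0 t ht
        have hle1 : K.card ≤ (K.image (fun w => A w ∩ T1)).card + N := by omega
        obtain ⟨T, hT1T, hTS, hinjT, hTcard⟩ := ih T1 hT1S hle1
        refine ⟨T, (Finset.subset_insert s T0).trans hT1T, hTS, hinjT, ?_⟩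
        have : T1.card ≤ T0.card + 1 := Finset.card_insert_le s T0
        omega
      have hAne : A u ≠ A v := fun h => huv (hA u hu v hv h)
      by_cases hsub : A u ⊆ A v
      · have : ¬ A v ⊆ A u := fun h => hAne (Finset.Subset.antisymm hsub h)
        obtain ⟨s, hs1, hs2⟩ := Finset.not_subset.mp this
        exact main v u s hv hu heq.symm hs1 hs2
      · obtain ⟨s, hs1, hs2⟩ := Finset.not_subset.mp hsub
        exact main u v s hu hv heq hs1 hs2

/-- A separating family of size at most `|K| - 1` exists. -/
lemma sep_exists (K : Finset V) (hKne : K.Nonempty)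
    (hA : ∀ u ∈ K, ∀ v ∈ K, Af G K u = Af G K v → u = v) :
    ∃ T : Finset V, (∀ s ∈ T, s ∉ K) ∧
      (∀ u ∈ K, ∀ v ∈ K, Af G K u ∩ T = Af G K v ∩ T → u = v) ∧ T.card + 1 ≤ K.card := by
  have hAS : ∀ u ∈ K, ∀ s ∈ Af G K u, s ∉ K := fun u _ s hs => (mem_Af G |>.mp hs).1
  have himg : K.image (fun u => Af G K u ∩ (∅ : Finset V)) = {∅} := by
    rw [Finset.image_congr (g := fun _ => (∅ : Finset V)) (fun u _ => Finset.inter_empty _)]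
    exact Finset.image_const hKne _
  have hle : K.card ≤ (K.image (fun u => Af G K u ∩ (∅ : Finset V))).card + (K.card - 1) := by
    rw [himg]
    have h1 : ({∅} : Finset (Finset V)).card = 1 := rfl
    have := hKne.card_pos
    omega
  obtain ⟨T, _, hTS, hinj, hTcard⟩ :=
    sep_extend K (Af G K) hA hAS (K.card - 1) ∅ (by simp) hle
  refine ⟨T, hTS, hinj, ?_⟩
  simp only [Finset.card_empty] at hTcard
  have := hKne.card_pos
  omega

/-- Main verification lemma: from the combinatorial data, build the coloring. -/
lemma build_coloring (K T : Finset V) (wb wx : V)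
    (hK : G.IsClique (K : Set V))
    (hind : ∀ u ∉ K, ∀ v ∉ K, ¬ G.Adj u v)
    (hwb : wb ∈ K) (hwx : wx ∈ K) (hne : wb ≠ wx)
    (hTS : ∀ s ∈ T, s ∉ K)
    (hTcard : T.card + 1 ≤ K.card)
    (hinj : ∀ u ∈ K, ∀ v ∈ K, Af G K u ∩ T = Af G K v ∩ T → u = v)
    (hH4 : ∀ u ∈ K, ∀ s ∈ Af G K u, Af G K u ∩ T ⊆ {s} →
      wb ∉ Bf G K s ∨ wx ∉ Bf G K s) :
    ∃ c : V → ℕ, (∀ v, c v < K.card + 2) ∧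
      ∀ u v, G.Adj u v → c '' closedNbhd G u ≠ c '' closedNbhd G v := by
  have e := T.equivFin
  classical
  set c : V → ℕ := fun v =>
    if hv : v = wx then 2 else if v = wb then 1 else
      if hvT : v ∈ T then 3 + (e ⟨v, hvT⟩ : ℕ) else 0 with hc
  have hKcard : 0 < K.card := Finset.card_pos.mpr ⟨wb, hwb⟩
  have hcwx : c wx = 2 := by simp [hc]
  have hcwb : c wb = 1 := by simp [hc, hne]
  have hcT : ∀ s, (hs : s ∈ T) → c s = 3 + (e ⟨s, hs⟩ : ℕ) := by
    intro s hs
    have h1 : s ≠ wx := fun h => (hTS s hs) (h ▸ hwx)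
    have h2 : s ≠ wb := fun h => (hTS s hs) (h ▸ hwb)
    simp [hc, h1, h2, hs]
  have hbright : ∀ y, 3 ≤ c y → y ∈ T := by
    intro y hy
    by_contra hyT
    simp only [hc] at hy
    split_ifs at hy <;> omega
  have huniq1 : ∀ y, c y = 1 → y = wb := by
    intro y hy
    simp only [hc] at hy
    split_ifs at hy <;> first | assumption | omega
  have huniq2 : ∀ y, c y = 2 → y = wx := by
    intro y hy
    simp only [hc] at hy
    split_ifs at hy <;> first | assumption | omega
  have hTinj : ∀ s, (hs : s ∈ T) → ∀ t, (ht : t ∈ T) → c s = c t → s = t := by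
    intro s hs t ht hst
    rw [hcT s hs, hcT t ht] at hst
    have : (e ⟨s, hs⟩ : Fin T.card) = e ⟨t, ht⟩ := Fin.ext (by omega)
    exact congrArg Subtype.val (e.injective this)
  -- P1 : distinct clique vertices get distinct color neighborhoods
  have key : ∀ a ∈ K, ∀ b ∈ K, c '' closedNbhd G a = c '' closedNbhd G b →
      Af G K a ∩ T ⊆ Af G K b ∩ T := by
    intro a ha b hb hab s hs
    obtain ⟨hsA, hsT⟩ := Finset.mem_inter.mp hs
    have hsN : s ∈ closedNbhd G a := by
      rw [closedNbhd_clique G hK ha]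
      exact Or.inr (Finset.mem_coe.mpr hsA)
    have hmem : c s ∈ c '' closedNbhd G b := hab ▸ ⟨s, hsN, rfl⟩
    obtain ⟨y, hyN, hyc⟩ := hmem
    have hy3 : 3 ≤ c y := by rw [hyc, hcT s hsT]; omega
    have hyT : y ∈ T := hbright y hy3
    have hyA : y ∈ Af G K b := by
      rw [closedNbhd_clique G hK hb] at hyN
      rcases hyN with hyK | hyA
      · exact absurd (Finset.mem_coe.mp hyK) (hTS y hyT)
      · exact Finset.mem_coe.mp hyA
    have : y = s := hTinj y hyT s hsT hyc
    subst this
    exact Finset.mem_inter.mpr ⟨hyA, hyT⟩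
  have P1 : ∀ u ∈ K, ∀ v ∈ K, c '' closedNbhd G u = c '' closedNbhd G v → u = v := by
    intro u hu v hv h
    exact hinj u hu v hv (Finset.Subset.antisymm (key u hu v hv h) (key v hv u hu h.symm))
  -- P2 : clique vertex vs adjacent independent vertex
  have P2 : ∀ u ∈ K, ∀ s ∈ Af G K u, c '' closedNbhd G u ≠ c '' closedNbhd G s := by
    intro u hu s hsA heq
    have hsK : s ∉ K := (mem_Af G |>.mp hsA).1
    have hNs : closedNbhd G s = insert s ((Bf G K s : Finset V) : Set V) :=
      closedNbhd_indep G hind hsK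
    by_cases hex : ∃ t ∈ Af G K u ∩ T, t ≠ s
    · obtain ⟨t, htm, hts⟩ := hex
      obtain ⟨htA, htT⟩ := Finset.mem_inter.mp htm
      have hγ : c t ∈ c '' closedNbhd G u := by
        refine ⟨t, ?_, rfl⟩
        rw [closedNbhd_clique G hK hu]
        exact Or.inr (Finset.mem_coe.mpr htA)
      rw [heq] at hγ
      obtain ⟨y, hyN, hyc⟩ := hγ
      have hy3 : 3 ≤ c y := by rw [hyc, hcT t htT]; omega
      have hyT : y ∈ T := hbright y hy3
      have hyK : y ∉ K := hTS y hyT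
      rw [hNs] at hyN
      rcases Set.mem_insert_iff.mp hyN with rfl | hyB
      · exact hts (hTinj t htT y hyT hyc.symm)
      · exact hyK ((mem_Bf G).mp (Finset.mem_coe.mp hyB)).1
    · push_neg at hex
      have hsub : Af G K u ∩ T ⊆ {s} := by
        intro t ht
        exact Finset.mem_singleton.mpr (hex t ht)
      rcases hH4 u hu s hsA hsub with hb | hx
      · have h1 : (1 : ℕ) ∈ c '' closedNbhd G u := by
          refine ⟨wb, ?_, hcwb⟩
          rw [closedNbhd_clique G hK hu]
          exact Or.inl (Finset.mem_coe.mpr hwb)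
        rw [heq] at h1
        obtain ⟨y, hyN, hyc⟩ := h1
        have hywb : y = wb := huniq1 y hyc
        subst hywb
        rw [hNs] at hyN
        rcases Set.mem_insert_iff.mp hyN with h | h
        · exact hsK (h ▸ hwb)
        · exact hb (Finset.mem_coe.mp h)
      · have h2 : (2 : ℕ) ∈ c '' closedNbhd G u := by
          refine ⟨wx, ?_, hcwx⟩
          rw [closedNbhd_clique G hK hu]
          exact Or.inl (Finset.mem_coe.mpr hwx)
        rw [heq] at h2
        obtain ⟨y, hyN, hyc⟩ := h2
        have hywx : y = wx := huniq2 y hyc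
        subst hywx
        rw [hNs] at hyN
        rcases Set.mem_insert_iff.mp hyN with h | h
        · exact hsK (h ▸ hwx)
        · exact hx (Finset.mem_coe.mp h)
  refine ⟨c, ?_, ?_⟩
  · intro v
    simp only [hc]
    split_ifs with h1 h2 h3
    · omega
    · omega
    · have := (e ⟨v, h3⟩).isLt
      omega
    · omega
  · intro u v hadj
    by_cases hu : u ∈ K <;> by_cases hv : v ∈ K
    · exact fun h => (G.ne_of_adj hadj) (P1 u hu v hv h)
    · exact P2 u hu v (mem_Af G |>.mpr ⟨hv, hadj⟩)
    · exact fun h => (P2 v hv u (mem_Af G |>.mpr ⟨hu, hadj.symm⟩)) h.symm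
    · exact absurd hadj (hind u hu v hv)

/-- Packaging lemma for the case where the separating family covers every clique vertex. -/
lemma pack2a (K T : Finset V) (h2 : 2 ≤ K.card)
    (hmax : ∀ s ∉ K, ∃ u ∈ K, ¬ G.Adj s u)
    (hTS : ∀ s ∈ T, s ∉ K)
    (hinj : ∀ u ∈ K, ∀ v ∈ K, Af G K u ∩ T = Af G K v ∩ T → u = v)
    (hcov : ∀ u ∈ K, (Af G K u ∩ T).Nonempty) :
    ∃ wb wx, wb ∈ K ∧ wx ∈ K ∧ wb ≠ wx ∧
      (∀ u ∈ K, ∀ s ∈ Af G K u, Af G K u ∩ T ⊆ {s} →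
        wb ∉ Bf G K s ∨ wx ∉ Bf G K s) := by
  have hsingle : ∀ u ∈ K, ∀ s ∈ Af G K u, Af G K u ∩ T ⊆ {s} → Af G K u ∩ T = {s} := by
    intro u hu s hsA hsub
    obtain ⟨t, ht⟩ := hcov u hu
    have hts : t = s := Finset.mem_singleton.mp (hsub ht)
    subst hts
    exact Finset.Subset.antisymm hsub (Finset.singleton_subset_iff.mpr ht)
  by_cases hE : ∃ u ∈ K, ∃ s, Af G K u ∩ T = {s}
  · obtain ⟨ue, hue, en, hcode⟩ := hE
    have henm : en ∈ Af G K ue ∩ T := hcode ▸ Finset.mem_singleton_self en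
    have heT : en ∈ T := (Finset.mem_inter.mp henm).2
    have heA : en ∈ Af G K ue := (Finset.mem_inter.mp henm).1
    have heS : en ∉ K := hTS en heT
    obtain ⟨z, hzK, hz⟩ := hmax en heS
    refine ⟨ue, z, hue, hzK, ?_, ?_⟩
    · intro h
      exact hz (h ▸ ((mem_Af G).mp heA).2.symm)
    · intro u hu s hsA hsub
      have hcodeu : Af G K u ∩ T = {s} := hsingle u hu s hsA hsub
      have hsT : s ∈ T := (Finset.mem_inter.mp (hcodeu ▸ Finset.mem_singleton_self s)).2
      by_cases hse : s = en
      · subst hse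
        have hueq : u = ue := hinj u hu ue hue (hcodeu.trans hcode.symm)
        right
        intro hmem
        exact hz ((mem_Bf G).mp hmem).2
      · left
        intro hmem
        have hadj : G.Adj ue s := ((mem_Bf G).mp hmem).2.symm
        have : s ∈ Af G K ue ∩ T :=
          Finset.mem_inter.mpr ⟨(mem_Af G).mpr ⟨hTS s hsT, hadj⟩, hsT⟩
        rw [hcode] at this
        exact hse (Finset.mem_singleton.mp this)
  · obtain ⟨wb, hwb, wx, hwx, hne⟩ := Finset.one_lt_card.mp (by omega : 1 < K.card)
    refine ⟨wb, wx, hwb, hwx, hne, ?_⟩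
    intro u hu s hsA hsub
    exact absurd ⟨u, hu, s, hsingle u hu s hsA hsub⟩ hE

/-- Construction of the combinatorial data for the main coloring. -/
lemma exists_data (K : Finset V) (h2 : 2 ≤ K.card)
    (hmax : ∀ s ∉ K, ∃ u ∈ K, ¬ G.Adj s u)
    (hA : ∀ u ∈ K, ∀ v ∈ K, Af G K u = Af G K v → u = v) :
    ∃ T wb wx, (∀ s ∈ T, s ∉ K) ∧ T.card + 1 ≤ K.card ∧
      wb ∈ K ∧ wx ∈ K ∧ wb ≠ wx ∧
      (∀ u ∈ K, ∀ v ∈ K, Af G K u ∩ T = Af G K v ∩ T → u = v) ∧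
      (∀ u ∈ K, ∀ s ∈ Af G K u, Af G K u ∩ T ⊆ {s} →
        wb ∉ Bf G K s ∨ wx ∉ Bf G K s) := by
  classical
  have hAS : ∀ u ∈ K, ∀ s ∈ Af G K u, s ∉ K := fun u _ s hs => ((mem_Af G).mp hs).1
  have hKne : K.Nonempty := Finset.card_pos.mp (by omega)
  by_cases hpend : ∃ u ∈ K, (Af G K u).card ≤ 1
  · obtain ⟨u0, hu0, hcard⟩ := hpend
    obtain ⟨T, hTS, hinj, hTcard⟩ := sep_exists G K hKne hA
    rcases (Af G K u0).eq_empty_or_nonempty with hemp | hne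
    · obtain ⟨z, hzK, hzne⟩ := Finset.exists_mem_ne (by omega : 1 < K.card) u0
      refine ⟨T, z, u0, hTS, hTcard, hzK, hu0, hzne, hinj, ?_⟩
      intro u hu s hsA _
      right
      intro hmem
      have : s ∈ Af G K u0 :=
        (mem_Af G).mpr ⟨hAS u hu s hsA, ((mem_Bf G).mp hmem).2.symm⟩
      rw [hemp] at this
      exact Finset.notMem_empty s this
    · obtain ⟨σ, hσ⟩ := Finset.card_eq_one.mp (le_antisymm hcard hne.card_pos)
      have hσA : σ ∈ Af G K u0 := hσ ▸ Finset.mem_singleton_self σ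
      have hσS : σ ∉ K := ((mem_Af G).mp hσA).1
      obtain ⟨z, hzK, hz⟩ := hmax σ hσS
      have hzne : z ≠ u0 := by
        intro h
        exact hz (h ▸ ((mem_Af G).mp hσA).2.symm)
      refine ⟨T, z, u0, hTS, hTcard, hzK, hu0, hzne, hinj, ?_⟩
      intro u hu s hsA _
      by_cases hmem : u0 ∈ Bf G K s
      · have hsu0 : s ∈ Af G K u0 :=
          (mem_Af G).mpr ⟨hAS u hu s hsA, ((mem_Bf G).mp hmem).2.symm⟩
        rw [hσ] at hsu0
        have hseq : s = σ := Finset.mem_singleton.mp hsu0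
        left
        intro hzb
        exact hz (hseq ▸ ((mem_Bf G).mp hzb).2)
      · exact Or.inr hmem
  · push_neg at hpend
    obtain ⟨T1, hT1S, hinj1, hT1card⟩ := sep_exists G K hKne hA
    by_cases hcov : ∀ u ∈ K, (Af G K u ∩ T1).Nonempty
    · obtain ⟨wb, wx, hwb, hwx, hne, hH4⟩ := pack2a G K T1 h2 hmax hT1S hinj1 hcov
      exact ⟨T1, wb, wx, hT1S, hT1card, hwb, hwx, hne, hinj1, hH4⟩
    · push_neg at hcov
      obtain ⟨u0, hu0, hcode0⟩ := hcov
      have hcode0' : Af G K u0 ∩ T1 = ∅ := hcode0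
      have hu0card : 2 ≤ (Af G K u0).card := hpend u0 hu0
      by_cases hw : ∃ w ∈ K, Af G K w ∩ Af G K u0 = ∅
      · obtain ⟨w, hwK, hwA⟩ := hw
        have hwne : w ≠ u0 := by
          intro h
          subst h
          rw [Finset.inter_self] at hwA
          rw [hwA] at hu0card
          simp at hu0card
        refine ⟨T1, w, u0, hT1S, hT1card, hwK, hu0, hwne, hinj1, ?_⟩
        intro u hu s hsA _
        by_cases hmem : u0 ∈ Bf G K s
        · left
          intro hwb
          have hsw : s ∈ Af G K w :=
            (mem_Af G).mpr ⟨hAS u hu s hsA, ((mem_Bf G).mp hwb).2.symm⟩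
          have hsu0 : s ∈ Af G K u0 :=
            (mem_Af G).mpr ⟨hAS u hu s hsA, ((mem_Bf G).mp hmem).2.symm⟩
          have : s ∈ Af G K w ∩ Af G K u0 := Finset.mem_inter.mpr ⟨hsw, hsu0⟩
          rw [hwA] at this
          exact Finset.notMem_empty s this
        · exact Or.inr hmem
      · push_neg at hw
        -- every clique vertex shares an outside neighbour with u0 : build a minimal cover
        have hAu0cov : ∀ w ∈ K, ∃ s ∈ Af G K u0, w ∈ Bf G K s := by
          intro w hwK
          obtain ⟨s, hs⟩ := (hw w hwK)
          obtain ⟨hsw, hsu0⟩ := Finset.mem_inter.mp hs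
          exact ⟨s, hsu0, (mem_Bf G).mpr ⟨hwK, ((mem_Af G).mp hsw).2.symm⟩⟩
        set cands := (Af G K u0).powerset.filter
          (fun T0 => ∀ w ∈ K, ∃ s ∈ T0, w ∈ Bf G K s) with hcands
        have hcne : cands.Nonempty := by
          refine ⟨Af G K u0, Finset.mem_filter.mpr ⟨Finset.mem_powerset_self _, ?_⟩⟩
          exact hAu0cov
        obtain ⟨T0, hT0mem, hT0min⟩ := Finset.exists_min_image cands Finset.card hcne
        have hT0sub : T0 ⊆ Af G K u0 := Finset.mem_powerset.mp (Finset.mem_filter.mp hT0mem).1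
        have hT0cov : ∀ w ∈ K, ∃ s ∈ T0, w ∈ Bf G K s := (Finset.mem_filter.mp hT0mem).2
        have hT0S : ∀ s ∈ T0, s ∉ K := fun s hs => hAS u0 hu0 s (hT0sub hs)
        have hT0two : 2 ≤ T0.card := by
          by_contra hlt
          push_neg at hlt
          rcases T0.eq_empty_or_nonempty with rfl | hT0ne
          · obtain ⟨w, hwK⟩ := hKne
            obtain ⟨s, hs, _⟩ := hT0cov w hwK
            exact Finset.notMem_empty s hs
          · obtain ⟨s, hs⟩ := Finset.card_eq_one.mp (le_antisymm (by omega) hT0ne.card_pos)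
            have hsS : s ∉ K := hT0S s (hs ▸ Finset.mem_singleton_self s)
            obtain ⟨z, hzK, hz⟩ := hmax s hsS
            obtain ⟨t, htT0, htb⟩ := hT0cov z hzK
            rw [hs] at htT0
            have := Finset.mem_singleton.mp htT0
            subst this
            exact hz ((mem_Bf G).mp htb).2
        have hpriv : ∀ s ∈ T0, ∃ v ∈ K, Af G K v ∩ T0 = {s} := by
          intro s hs
          have hex : ∃ v ∈ K, ∀ t ∈ T0, v ∈ Bf G K t → t = s := by
            by_contra hcon
            push_neg at hcon
            have hcov' : ∀ w ∈ K, ∃ t ∈ T0.erase s, w ∈ Bf G K t := by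
              intro w hwK
              obtain ⟨t, ht, htb, hts⟩ := hcon w hwK
              exact ⟨t, Finset.mem_erase.mpr ⟨hts, ht⟩, htb⟩
            have hmem' : T0.erase s ∈ cands := Finset.mem_filter.mpr
              ⟨Finset.mem_powerset.mpr ((Finset.erase_subset s T0).trans hT0sub), hcov'⟩
            have hle := hT0min _ hmem'
            rw [Finset.card_erase_of_mem hs] at hle
            have := Finset.card_pos.mpr ⟨s, hs⟩
            omega
          obtain ⟨v, hvK, hvp⟩ := hex
          obtain ⟨t, htT0, htb⟩ := hT0cov v hvK
          have hts := hvp t htT0 htb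
          subst hts
          refine ⟨v, hvK, ?_⟩
          apply Finset.Subset.antisymm
          · intro y hy
            obtain ⟨hyA, hyT⟩ := Finset.mem_inter.mp hy
            exact Finset.mem_singleton.mpr
              (hvp y hyT ((mem_Bf G).mpr ⟨hvK, ((mem_Af G).mp hyA).2.symm⟩))
          · intro y hy
            have hyt := Finset.mem_singleton.mp hy
            subst hyt
            refine Finset.mem_inter.mpr ⟨?_, htT0⟩
            exact (mem_Af G).mpr ⟨hT0S y htT0, ((mem_Bf G).mp htb).2.symm⟩
        -- the image of codes has at least |T0| + 1 elements
        have hfullmem : T0 ∈ K.image (fun u => Af G K u ∩ T0) := by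
          refine Finset.mem_image.mpr ⟨u0, hu0, ?_⟩
          rw [Finset.inter_eq_right.mpr hT0sub]
        have hsingmem : ∀ s ∈ T0, ({s} : Finset V) ∈ K.image (fun u => Af G K u ∩ T0) := by
          intro s hs
          obtain ⟨v, hvK, hc⟩ := hpriv s hs
          exact Finset.mem_image.mpr ⟨v, hvK, hc⟩
        have himgcard : T0.card + 1 ≤ (K.image (fun u => Af G K u ∩ T0)).card := by
          have hsub : insert T0 (T0.image (fun s => ({s} : Finset V)))
              ⊆ K.image (fun u => Af G K u ∩ T0) := by
            intro X hX
            rcases Finset.mem_insert.mp hX with rfl | hX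
            · exact hfullmem
            · obtain ⟨s, hs, rfl⟩ := Finset.mem_image.mp hX
              exact hsingmem s hs
          have hcardins : (insert T0 (T0.image (fun s => ({s} : Finset V)))).card
              = T0.card + 1 := by
            rw [Finset.card_insert_of_notMem, Finset.card_image_of_injective _
              Finset.singleton_injective]
            intro hmem
            obtain ⟨s, _, hT0s⟩ := Finset.mem_image.mp hmem
            rw [← hT0s] at hT0two
            simp at hT0two
          calc T0.card + 1 = _ := hcardins.symm
            _ ≤ _ := Finset.card_le_card hsub
        have himgK : (K.image (fun u => Af G K u ∩ T0)).card ≤ K.card := Finset.card_image_le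
        have hT0K : T0.card + 1 ≤ K.card := le_trans himgcard himgK
        obtain ⟨T, hT0T, hTS, hinjT, hTcard⟩ :=
          sep_extend K (Af G K) hA hAS (K.card - (T0.card + 1)) T0 hT0S (by omega)
        have hTcard' : T.card + 1 ≤ K.card := by omega
        have hcovT : ∀ u ∈ K, (Af G K u ∩ T).Nonempty := by
          intro u hu
          obtain ⟨s, hsT0, hsb⟩ := hT0cov u hu
          exact ⟨s, Finset.mem_inter.mpr
            ⟨(mem_Af G).mpr ⟨hT0S s hsT0, ((mem_Bf G).mp hsb).2.symm⟩, hT0T hsT0⟩⟩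
        obtain ⟨wb, wx, hwb, hwx, hne, hH4⟩ := pack2a G K T h2 hmax hTS hinjT hcovT
        exact ⟨T, wb, wx, hTS, hTcard', hwb, hwx, hne, hinjT, hH4⟩

end RlidSplitAux

theorem rlid_split_upper {V : Type*} [Fintype V] (G : SimpleGraph V)
    (hconn : G.Connected) (htf : TwinFree G) (hsplit : IsSplitGraph G) :
    rlidChromNum G ≤ G.cliqueNum + 2 := by
  classical
  obtain ⟨K0, hK0c, hK0i⟩ := hsplit
  set cand : Finset (Finset V) :=
    Finset.univ.powerset.filter (fun A => G.IsClique (A : Set V) ∧ K0 ⊆ (A : Set V)) with hcand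
  have hcne : cand.Nonempty := by
    refine ⟨K0.toFinset, Finset.mem_filter.mpr
      ⟨Finset.mem_powerset.mpr (Finset.subset_univ _), ?_, ?_⟩⟩
    · rwa [Set.coe_toFinset]
    · rw [Set.coe_toFinset]
  obtain ⟨K, hKmem, hKmax'⟩ := Finset.exists_max_image cand Finset.card hcne
  have hKcl : G.IsClique (K : Set V) := (Finset.mem_filter.mp hKmem).2.1
  have hK0K : K0 ⊆ (K : Set V) := (Finset.mem_filter.mp hKmem).2.2
  have hind : ∀ u ∉ K, ∀ v ∉ K, ¬ G.Adj u v := by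
    intro u hu v hv
    exact hK0i u (fun h => hu (hK0K h)) v (fun h => hv (hK0K h))
  have hmax : ∀ s ∉ K, ∃ u ∈ K, ¬ G.Adj s u := by
    intro s hs
    by_contra hcon
    push_neg at hcon
    have hclq : G.IsClique ((insert s K : Finset V) : Set V) := by
      rw [Finset.coe_insert]
      exact hKcl.insert (fun b hb _ => hcon b (Finset.mem_coe.mp hb))
    have hmem : insert s K ∈ cand := Finset.mem_filter.mpr
      ⟨Finset.mem_powerset.mpr (Finset.subset_univ _), hclq,
        hK0K.trans (by rw [Finset.coe_insert]; exact Set.subset_insert _ _)⟩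
    have := hKmax' _ hmem
    rw [Finset.card_insert_of_notMem hs] at this
    omega
  haveI : DecidableRel G.Adj := fun _ _ => Classical.propDecidable _
  have hA : ∀ u ∈ K, ∀ v ∈ K, RlidSplitAux.Af G K u = RlidSplitAux.Af G K v → u = v := by
    intro u hu v hv h
    apply htf
    rw [RlidSplitAux.closedNbhd_clique G hKcl hu, RlidSplitAux.closedNbhd_clique G hKcl hv, h]
  have hpos : 0 < G.cliqueNum + 2 := by omega
  by_cases hK2 : 2 ≤ K.card
  · obtain ⟨T, wb, wx, hTS, hTcard, hwb, hwx, hne, hinj, hH4⟩ :=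
      RlidSplitAux.exists_data G K hK2 hmax hA
    obtain ⟨c, hlt, hcol⟩ :=
      RlidSplitAux.build_coloring G K T wb wx hKcl hind hwb hwx hne hTS hTcard hinj hH4
    have hKw : K.card ≤ G.cliqueNum := SimpleGraph.IsClique.card_le_cliqueNum (tc := hKcl)
    have hlt' : ∀ v, c v < G.cliqueNum + 2 := fun v => lt_of_lt_of_le (hlt v) (by omega)
    apply Nat.sInf_le
    refine ⟨fun v => ⟨c v, hlt' v⟩, ?_⟩
    intro u v hadj _ h
    apply hcol u v hadj
    have h2 := congrArg (Set.image (Fin.val : Fin (G.cliqueNum + 2) → ℕ)) h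
    rw [← Set.image_comp, ← Set.image_comp] at h2
    exact h2
  · have hnoadj : ∀ u v : V, ¬ G.Adj u v := by
      intro u v hadj
      by_cases hu : u ∈ K <;> by_cases hv : v ∈ K
      · exact G.ne_of_adj hadj (Finset.card_le_one.mp (by omega) u hu v hv)
      · obtain ⟨z, hzK, hz⟩ := hmax v hv
        have hzu : z = u := Finset.card_le_one.mp (by omega) z hzK u hu
        exact hz (hzu ▸ hadj.symm)
      · obtain ⟨z, hzK, hz⟩ := hmax u hu
        have hzv : z = v := Finset.card_le_one.mp (by omega) z hzK v hv
        exact hz (hzv ▸ hadj)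
      · exact hind u hu v hv hadj
    apply Nat.sInf_le
    exact ⟨fun _ => ⟨0, hpos⟩, fun u v hadj => absurd hadj (hnoadj u v)⟩
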